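/- Let (T,Σ,μ) be a complete finite measure space and E a Banach space. If {f_n} is a well-dominated sequence in L¹(μ,E) converging weakly in L¹(μ,E) to f, then f(t) ∈ co̅ w-Ls{f_n(t)} for a.e. t ∈ T, where co̅ denotes the closed convex hull. -/

import Mathlib

open MeasureTheory Filter Topology Set

noncomputable section

/-- The (strong) upper limit `Ls {F n}` of a sequence of sets in a topological space:
all points that are limits of some subsequence of points `x_{n_i} ∈ F_{n_i}`. -/
def Ls {E : Type*} [TopologicalSpace E] (F : ℕ → Set E) : Set E :=
  {x | ∃ φ : ℕ → ℕ, StrictMono φ ∧ ∃ u : ℕ → E,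
    (∀ i, u i ∈ F (φ i)) ∧ Tendsto u atTop (𝓝 x)}

/-- A multifunction is integrably bounded. -/
def IntegrablyBounded {T : Type*} [MeasurableSpace T] {E : Type*} [NormedAddCommGroup E]
    (μ : Measure T) (Γ : T → Set E) : Prop :=
  ∃ φ : T → ℝ, Integrable φ μ ∧ ∀ᵐ t ∂μ, ∀ x ∈ Γ t, ‖x‖ ≤ φ t

/-- A set in a normed space is weakly compact if it is compact in the weak topology. -/
def WeaklyCompact {E : Type*} [NormedAddCommGroup E] [NormedSpace ℝ E] (s : Set E) : Prop :=
  IsCompact (toWeakSpace ℝ E '' s)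

/-- The weak upper limit `w-Ls {F n}` of a sequence of sets in a normed space. -/
def wLs {E : Type*} [NormedAddCommGroup E] [NormedSpace ℝ E] (F : ℕ → Set E) : Set E :=
  {x | ∃ φ : ℕ → ℕ, StrictMono φ ∧ ∃ u : ℕ → E, (∀ i, u i ∈ F (φ i)) ∧
    ∀ p : E →L[ℝ] ℝ, Tendsto (fun i => p (u i)) atTop (𝓝 (p x))}

/-- Sequential weak compactness extracted from weak compactness (easy direction of
Eberlein–Šmulian, via a separable reduction). -/
lemma exists_subseq_weak_tendsto {E : Type*} [NormedAddCommGroup E] [NormedSpace ℝ E]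
    [CompleteSpace E] {K : Set E} (hK : WeaklyCompact K) {x : ℕ → E} (hx : ∀ n, x n ∈ K) :
    ∃ φ : ℕ → ℕ, StrictMono φ ∧ ∃ y : E,
      ∀ p : E →L[ℝ] ℝ, Tendsto (fun i => p (x (φ i))) atTop (𝓝 (p y)) := by
  classical
  set D : Submodule ℝ E := (Submodule.span ℝ (Set.range x)).topologicalClosure with hDdef
  have hxD : ∀ n, x n ∈ D := fun n =>
    Submodule.le_topologicalClosure _ (Submodule.subset_span ⟨n, rfl⟩)
  have hsep : TopologicalSpace.IsSeparable (D : Set E) := by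
    have h1 : TopologicalSpace.IsSeparable (Submodule.span ℝ (Set.range x) : Set E) :=
      (Set.countable_range x).isSeparable.span
    have := h1.closure
    simpa [hDdef, Submodule.topologicalClosure_coe] using this
  obtain ⟨c₀, hc₀, hc₀sub⟩ := hsep
  obtain ⟨d, hd⟩ := (hc₀.insert (0 : E)).exists_eq_range (Set.insert_nonempty _ _)
  have hdense : (D : Set E) ⊆ closure (Set.range d) := by
    rw [← hd]
    exact hc₀sub.trans (closure_mono (Set.subset_insert _ _))
  choose p hp1 hp2 using fun j : ℕ => exists_dual_vector'' ℝ (d j)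
  -- the functionals `p j` separate points of `D`
  have hsepar : ∀ w ∈ D, w ≠ 0 → ∃ j, p j w ≠ 0 := by
    intro w hw hw0
    obtain ⟨j, hj⟩ : ∃ j, ‖d j - w‖ < ‖w‖ / 3 := by
      obtain ⟨e, ⟨j, rfl⟩, he⟩ := Metric.mem_closure_iff.mp (hdense hw) (‖w‖ / 3)
        (by have : 0 < ‖w‖ := norm_pos_iff.mpr hw0; linarith)
      exact ⟨j, by rwa [dist_comm, dist_eq_norm] at he⟩
    refine ⟨j, ?_⟩
    have hp2' : p j (d j) = ‖d j‖ := by simpa using hp2 j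
    have heq : p j w = ‖d j‖ - p j (d j - w) := by
      rw [map_sub, hp2']; ring
    have hb : |p j (d j - w)| ≤ ‖d j - w‖ := by
      calc |p j (d j - w)| = ‖p j (d j - w)‖ := (Real.norm_eq_abs _).symm
        _ ≤ ‖p j‖ * ‖d j - w‖ := (p j).le_opNorm _
        _ ≤ 1 * ‖d j - w‖ := by gcongr; exact hp1 j
        _ = ‖d j - w‖ := one_mul _
    have hn : ‖w‖ - ‖d j - w‖ ≤ ‖d j‖ := by
      have h1 : ‖w‖ - ‖d j‖ ≤ ‖w - d j‖ := norm_sub_norm_le _ _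
      have h2 : ‖w - d j‖ = ‖d j - w‖ := norm_sub_rev _ _
      linarith
    have habs := abs_le.mp hb
    have : 0 < p j w := by
      have hwpos : 0 < ‖w‖ := norm_pos_iff.mpr hw0
      rw [heq]; linarith
    exact ne_of_gt this
  -- D is weakly closed, so K ∩ D is weakly compact
  have hDconv : Convex ℝ (D : Set E) := D.convex
  have hDcl : IsClosed (D : Set E) := Submodule.isClosed_topologicalClosure _
  have hDwcl : IsClosed (toWeakSpace ℝ E '' (D : Set E)) := by
    have h1 := hDconv.toWeakSpace_closure (𝕜 := ℝ)
    rw [hDcl.closure_eq] at h1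
    rw [h1]
    exact isClosed_closure
  have hCcpt : IsCompact (toWeakSpace ℝ E '' (K ∩ (D : Set E))) := by
    rw [Set.image_inter (toWeakSpace ℝ E).injective]
    exact hK.inter_right hDwcl
  set C : Set (WeakSpace ℝ E) := toWeakSpace ℝ E '' (K ∩ (D : Set E)) with hCdef
  -- the map into ℝ^ℕ
  set Φ : WeakSpace ℝ E → (ℕ → ℝ) := fun w j => (topDualPairing ℝ E).flip w (p j) with hΦdef
  have hΦcont : Continuous Φ :=
    continuous_pi fun j => WeakBilin.eval_continuous _ (p j)
  have hΦval : ∀ (v : E) (j : ℕ), Φ (toWeakSpace ℝ E v) j = p j v := fun v j => rfl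
  have hΦinj : Set.InjOn Φ C := by
    rintro _ ⟨v, hv, rfl⟩ _ ⟨v', hv', rfl⟩ h
    have heq : v = v' := by
      by_contra hne
      obtain ⟨j, hj⟩ := hsepar (v - v') (sub_mem hv.2 hv'.2) (sub_ne_zero.mpr hne)
      apply hj
      have := congrFun h j
      rw [hΦval, hΦval] at this
      rw [map_sub, this, sub_self]
    rw [heq]
  haveI : CompactSpace C := isCompact_iff_compactSpace.mp hCcpt
  set e : C → (ℕ → ℝ) := fun w => Φ w with hedef
  have he_cont : Continuous e := hΦcont.comp continuous_subtype_val
  have he_inj : Function.Injective e := fun a b hab => Subtype.ext (hΦinj a.2 b.2 hab)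
  have he : IsClosedEmbedding e := he_cont.isClosedEmbedding he_inj
  have hmem : ∀ n, toWeakSpace ℝ E (x n) ∈ C := fun n => ⟨x n, ⟨hx n, hxD n⟩, rfl⟩
  set u : ℕ → C := fun n => ⟨toWeakSpace ℝ E (x n), hmem n⟩ with hudef
  obtain ⟨a, ⟨y₀, rfl⟩, φ, hφ, hconv⟩ :=
    (isCompact_range he_cont).isSeqCompact (x := fun n => e (u n)) (fun n => ⟨u n, rfl⟩)
  have hu : Tendsto (u ∘ φ) atTop (𝓝 y₀) := by
    rw [he.isEmbedding.tendsto_nhds_iff]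
    exact hconv
  have hval : Tendsto (fun i => toWeakSpace ℝ E (x (φ i))) atTop (𝓝 (y₀ : WeakSpace ℝ E)) :=
    (continuous_subtype_val.tendsto y₀).comp hu
  refine ⟨φ, hφ, (toWeakSpace ℝ E).symm (y₀ : WeakSpace ℝ E), fun q => ?_⟩
  have hq : Continuous fun w : WeakSpace ℝ E => (topDualPairing ℝ E).flip w q :=
    WeakBilin.eval_continuous _ q
  have := (hq.tendsto _).comp hval
  exact this

/-- Mazur-type lemma: a weak limit lies in the closed convex hull of every tail. -/
lemma mem_closure_convexHull_tail {X : Type*} [NormedAddCommGroup X] [NormedSpace ℝ X]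
    {f : ℕ → X} {g : X} (hweak : ∀ p : X →L[ℝ] ℝ, Tendsto (fun n => p (f n)) atTop (𝓝 (p g)))
    (m : ℕ) : g ∈ closure (convexHull ℝ (f '' Ici m)) := by
  by_contra hc
  obtain ⟨p, u, hpu, hup⟩ := geometric_hahn_banach_closed_point
    ((convex_convexHull ℝ _).closure) isClosed_closure hc
  have : p g ≤ u := by
    refine le_of_tendsto (hweak p) ?_
    filter_upwards [eventually_ge_atTop m] with n hn
    exact (hpu _ (subset_closure (subset_convexHull ℝ _ ⟨n, hn, rfl⟩))).le
  exact absurd this (not_le.mpr hup)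

/-- Pointwise lemma: a point of every closed convex tail-hull of a sequence inside a weakly
compact set lies in the closed convex hull of the weak upper limit. -/
lemma mem_closure_convexHull_wLs {E : Type*} [NormedAddCommGroup E] [NormedSpace ℝ E]
    [CompleteSpace E] {K : Set E} (hK : WeaklyCompact K) {x : ℕ → E} (hx : ∀ n, x n ∈ K)
    {z : E} (hz : ∀ m, z ∈ closure (convexHull ℝ (x '' Ici m))) :
    z ∈ closure (convexHull ℝ (wLs fun n => {x n})) := by
  by_contra hc
  obtain ⟨p, u, hpu, hup⟩ := geometric_hahn_banach_closed_point
    ((convex_convexHull ℝ _).closure) isClosed_closure hc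
  have hwls : ∀ y ∈ wLs (fun n => {x n}), p y < u := fun y hy =>
    hpu _ (subset_closure (subset_convexHull ℝ _ hy))
  have key : ∃ m, ∀ n ≥ m, p (x n) < u := by
    by_contra h
    push_neg at h
    obtain ⟨φ, hφ, hφu⟩ := extraction_of_frequently_atTop
      (frequently_atTop.mpr fun m => (h m).imp fun n hn => ⟨hn.1, hn.2⟩)
    obtain ⟨ψ, hψ, y, hy⟩ := exists_subseq_weak_tendsto hK (x := fun i => x (φ i))
      (fun i => hx (φ i))
    have hywls : y ∈ wLs (fun n => {x n}) :=
      ⟨φ ∘ ψ, hφ.comp hψ, fun i => x (φ (ψ i)), fun i => rfl, hy⟩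
    have hge : u ≤ p y := ge_of_tendsto (hy p) (Eventually.of_forall fun i => hφu (ψ i))
    exact absurd (hwls y hywls) (not_lt.mpr hge)
  obtain ⟨m, hm⟩ := key
  have hsub : closure (convexHull ℝ (x '' Ici m)) ⊆ {w | p w ≤ u} := by
    refine closure_minimal (convexHull_min ?_ ?_) (isClosed_le p.continuous continuous_const)
    · rintro _ ⟨n, hn, rfl⟩
      exact (hm n hn).le
    · exact convex_halfSpace_le (p : E →ₗ[ℝ] ℝ).isLinear u
  exact absurd (hsub (hz m)) (not_le.mpr hup)

/-- The a.e. representative of a finite convex combination in `L¹` is a.e. the pointwise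
combination. -/
lemma coeFn_sum_smul {T : Type*} [MeasurableSpace T] {E : Type*} [NormedAddCommGroup E]
    [NormedSpace ℝ E] {μ : Measure T} {ι : Type*} (t : Finset ι) (w : ι → ℝ)
    (z : ι → Lp E 1 μ) :
    (⇑(∑ i ∈ t, w i • z i) : T → E) =ᵐ[μ] fun τ => ∑ i ∈ t, w i • ⇑(z i) τ := by
  classical
  induction t using Finset.cons_induction with
  | empty => simp only [Finset.sum_empty]; exact Lp.coeFn_zero E 1 μ
  | cons a s has ih =>
    rw [Finset.sum_cons]
    filter_upwards [Lp.coeFn_add (w a • z a) (∑ i ∈ s, w i • z i),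
      Lp.coeFn_smul (w a) (z a), ih] with τ h1 h2 h3
    simp only [Finset.sum_cons, h1, Pi.add_apply, h2, Pi.smul_apply, h3]

/-- **Khan–Majumdar lemma.** If a well-dominated sequence in `L¹(μ, E)` converges weakly
in `L¹(μ, E)` to `g`, then a.e. `g t` lies in the closed convex hull of the weak upper
limit `w-Ls {f n t}`. -/
theorem weak_L1_limit_mem_closedConvexHull_wLs {T : Type*} [MeasurableSpace T]
    {E : Type*} [NormedAddCommGroup E] [NormedSpace ℝ E] [CompleteSpace E]
    (μ : Measure T) [IsFiniteMeasure μ] (hcomp : μ.IsComplete)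
    (f : ℕ → Lp E 1 μ) (g : Lp E 1 μ)
    (hwd : ∃ Γ : T → Set E, IntegrablyBounded μ Γ ∧ (∀ t, (Γ t).Nonempty) ∧
      (∀ t, WeaklyCompact (Γ t)) ∧ ∀ n, ∀ᵐ t ∂μ, (f n : T → E) t ∈ Γ t)
    (hweak : ∀ p : Lp E 1 μ →L[ℝ] ℝ,
      Tendsto (fun n => p (f n)) atTop (𝓝 (p g))) :
    ∀ᵐ t ∂μ, (g : T → E) t ∈
      closure (convexHull ℝ (wLs (fun n => {(f n : T → E) t}))) := by
  classical
  obtain ⟨Γ, _hib, _hne, hwc, hmemΓ⟩ := hwd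
  -- Mazur: g lies in the closed convex hull of every tail in L¹
  have hM : ∀ m : ℕ, g ∈ closure (convexHull ℝ (f '' Ici m)) :=
    fun m => mem_closure_convexHull_tail hweak m
  -- choose convex combinations converging to g in L¹
  have hch : ∀ m : ℕ, ∃ b ∈ convexHull ℝ (f '' Ici m), dist g b < 1 / (m + 1) := fun m =>
    Metric.mem_closure_iff.mp (hM m) (1 / (m + 1)) (by positivity)
  choose h hhull hdist using hch
  have htend : Tendsto h atTop (𝓝 g) := by
    rw [tendsto_iff_dist_tendsto_zero]
    refine squeeze_zero (fun m => dist_nonneg) (fun m => ?_)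
      tendsto_one_div_add_atTop_nhds_zero_nat
    rw [dist_comm]
    exact (hdist m).le
  -- extract an a.e. convergent subsequence
  have hℒp : Tendsto (fun m => eLpNorm (⇑(h m) - ⇑g) 1 μ) atTop (𝓝 0) :=
    (Lp.tendsto_Lp_iff_tendsto_eLpNorm' h g).mp htend
  have htim : TendstoInMeasure μ (fun m => ⇑(h m)) atTop ⇑g :=
    tendstoInMeasure_of_tendsto_eLpNorm one_ne_zero
      (fun m => Lp.aestronglyMeasurable _) (Lp.aestronglyMeasurable _) hℒp
  obtain ⟨ns, hns, hae⟩ := htim.exists_seq_tendsto_ae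
  -- pointwise representation of the convex combinations
  have hrep : ∀ m : ℕ, ∀ᵐ τ ∂μ,
      ⇑(h m) τ ∈ convexHull ℝ ((fun n => ⇑(f n) τ) '' Ici m) := by
    intro m
    have hm := hhull m
    rw [convexHull_eq] at hm
    obtain ⟨ι, t, w, z, hw0, hw1, hz, hsum⟩ := hm
    choose! k hk1 hk2 using fun i hi => hz i hi
    have hsum' : h m = ∑ i ∈ t, w i • f (k i) := by
      rw [← hsum, Finset.centerMass_eq_of_sum_1 _ _ hw1]
      exact Finset.sum_congr rfl fun i hi => by rw [hk2 i hi]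
    filter_upwards [hsum' ▸ coeFn_sum_smul t w fun i => f (k i)] with τ hτ
    rw [hτ, ← Finset.centerMass_eq_of_sum_1 _ _ hw1]
    exact Finset.centerMass_mem_convexHull t hw0 (by rw [hw1]; exact one_pos)
      fun i hi => ⟨k i, hk1 i hi, rfl⟩
  have hΓ : ∀ᵐ τ ∂μ, ∀ n, ⇑(f n) τ ∈ Γ τ := ae_all_iff.mpr hmemΓ
  have hrep' : ∀ᵐ τ ∂μ, ∀ m, ⇑(h m) τ ∈ convexHull ℝ ((fun n => ⇑(f n) τ) '' Ici m) :=
    ae_all_iff.mpr hrep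
  filter_upwards [hΓ, hrep', hae] with τ h1 h2 h3
  refine mem_closure_convexHull_wLs (hwc τ) (x := fun n => ⇑(f n) τ) h1 fun m => ?_
  refine mem_closure_of_tendsto h3 ?_
  filter_upwards [eventually_ge_atTop m] with j hj
  exact convexHull_mono (Set.image_mono (Set.Ici_subset_Ici.mpr
    (le_trans hj hns.le_apply))) (h2 (ns j))

end
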